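/- Let Y be an L-dimensional subspace of a Hilbert space, and let f_M, g_M be bounded self-adjoint operators with f_M² + g_M² = 1 (as operators). If ‖g_M Φ‖² < 1/L for every unit vector Φ ∈ Y, then dim(f_M Y) = L. -/

import Mathlib

/-- If `Y` is an `L`-dimensional subspace of a Hilbert space, `f_M, g_M` are bounded
self-adjoint operators with `f_M² + g_M² = 1`, and `‖g_M Φ‖² < 1/L` for every unit
vector `Φ ∈ Y`, then `dim (f_M Y) = L`. -/
theorem stmt10 {H : Type*} [NormedAddCommGroup H] [InnerProductSpace ℂ H] [CompleteSpace H]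
    (Y : Submodule ℂ H) [FiniteDimensional ℂ Y] (L : ℕ)
    (hY : Module.finrank ℂ Y = L)
    (fM gM : H →L[ℂ] H) (hfsa : IsSelfAdjoint fM) (hgsa : IsSelfAdjoint gM)
    (hfg : fM.comp fM + gM.comp gM = 1)
    (hsmall : ∀ Φ ∈ Y, ‖Φ‖ = 1 → ‖gM Φ‖^2 < 1 / (L : ℝ)) :
    Module.finrank ℂ (Y.map (fM : H →ₗ[ℂ] H)) = L := by
  -- key identity : ‖fM Φ‖² + ‖gM Φ‖² = ‖Φ‖²
  have key : ∀ Φ : H, ‖fM Φ‖^2 + ‖gM Φ‖^2 = ‖Φ‖^2 := by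
    intro Φ
    have h1 : fM (fM Φ) + gM (gM Φ) = Φ := by
      have := congrArg (fun T : H →L[ℂ] H => T Φ) hfg
      simpa using this
    have h2 : inner ℂ (fM (fM Φ)) Φ + inner ℂ (gM (gM Φ)) Φ = (inner ℂ Φ Φ : ℂ) := by
      rw [← inner_add_left, h1]
    have hf : (inner ℂ (fM (fM Φ)) Φ : ℂ) = inner ℂ (fM Φ) (fM Φ) := by
      rw [← ContinuousLinearMap.adjoint_inner_right]
      rw [hfsa.adjoint_eq]
    have hg : (inner ℂ (gM (gM Φ)) Φ : ℂ) = inner ℂ (gM Φ) (gM Φ) := by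
      rw [← ContinuousLinearMap.adjoint_inner_right]
      rw [hgsa.adjoint_eq]
    rw [hf, hg] at h2
    have h3 := congrArg Complex.re h2
    simp only [inner_self_eq_norm_sq_to_K] at h3
    simpa [pow_two] using h3
  -- injectivity on Y
  have hinj : Function.Injective ((fM : H →ₗ[ℂ] H).comp Y.subtype) := by
    rw [← LinearMap.ker_eq_bot, LinearMap.ker_eq_bot']
    intro m hm
    by_contra hne
    have hm0 : (m : H) ≠ 0 := fun h => hne (Subtype.coe_injective h)
    have hn : ‖(m : H)‖ ≠ 0 := norm_ne_zero_iff.mpr hm0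
    set Φ : H := (‖(m : H)‖⁻¹ : ℂ) • (m : H) with hΦ
    have hΦY : Φ ∈ Y := Y.smul_mem _ m.2
    have hΦn : ‖Φ‖ = 1 := by
      simp [hΦ, norm_smul, inv_mul_cancel₀ hn]
    have hfΦ : fM Φ = 0 := by
      have : fM (m : H) = 0 := hm
      simp [hΦ, map_smul, this]
    have hgΦ : ‖gM Φ‖^2 = 1 := by
      have := key Φ
      rw [hfΦ, hΦn] at this
      simpa using this
    have hL := hsmall Φ hΦY hΦn
    rw [hgΦ] at hL
    -- L ≥ 1 since Y ≠ ⊥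
    have hL1 : 1 ≤ L := by
      rcases Nat.eq_zero_or_pos L with h0 | h1
      · subst h0; simp at hL; linarith
      · exact h1
    have : (1 : ℝ) / L ≤ 1 := by
      rw [div_le_one (by positivity)]
      exact_mod_cast hL1
    linarith
  have hrange : LinearMap.range ((fM : H →ₗ[ℂ] H).comp Y.subtype)
      = Y.map (fM : H →ₗ[ℂ] H) := by
    rw [LinearMap.range_comp, Submodule.range_subtype]
  rw [← hrange, LinearMap.finrank_range_of_inj hinj, hY]
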